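/- For n ≥ 1, let p̂_n denote the probability that the root (the vertex labelled 1) of a random recursive tree Λ_n with n vertices belongs to the layered independent set of Λ_n. Then p̂_1 = 1 and, for all n ≥ 2, p̂_n = (1/(n−1)) Σ_{j=1}^{n−1} (1 − p̂_j) p̂_{n−j}. -/

import Mathlib

open MeasureTheory ProbabilityTheory Filter Asymptotics

/-- `f` is a valid parent function of a recursive tree on vertices `0, 1, …, n-1`
(vertex `i` has label `i+1`): the root `0` is a fixed point and the parent of any
other vertex has a smaller index. -/
def IsRecParent {n : ℕ} (f : Fin n → Fin n) : Prop :=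
  ∀ i : Fin n, ((i : ℕ) = 0 → f i = i) ∧ ((i : ℕ) ≠ 0 → (f i : ℕ) < (i : ℕ))

instance {n : ℕ} : DecidablePred (@IsRecParent n) := fun f =>
  inferInstanceAs (Decidable
    (∀ i : Fin n, ((i : ℕ) = 0 → f i = i) ∧ ((i : ℕ) ≠ 0 → (f i : ℕ) < (i : ℕ))))

/-- Recursive trees on `n` vertices, encoded by their parent functions. The uniform
distribution on this type is exactly the distribution of the random recursive tree. -/
abbrev RecTree (n : ℕ) : Type := {f : Fin n → Fin n // IsRecParent f}

instance {n : ℕ} : Nonempty (RecTree n) :=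
  ⟨⟨fun i => ⟨0, i.pos⟩, fun i =>
    ⟨fun h => by apply Fin.ext; simp [h], fun h => Nat.pos_of_ne_zero h⟩⟩⟩

instance (n : ℕ) : MeasurableSpace (RecTree n) := ⊤

/-- The distribution of the random recursive tree on `n` vertices. -/
noncomputable def recMeasure (n : ℕ) : Measure (RecTree n) :=
  (PMF.uniformOfFintype (RecTree n)).toMeasure

/-- The graph associated to a parent function `p` on the vertex set `V`:
`u` and `v` are adjacent iff one is the parent of the other (fixed points give no loops). -/
def parentGraph {V : Type*} (p : V → V) : SimpleGraph V :=
  SimpleGraph.fromRel fun u v => p u = v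

/-- The leaves of the forest induced on the vertex subset `S`: members of `S` with no
children inside `S`. -/
def leafIn {V : Type*} (p : V → V) (S : Set V) : Set V :=
  {v | v ∈ S ∧ ∀ u ∈ S, u ≠ v → p u ≠ v}

/-- One step of the layer process: remove from `S` all leaves together with their parents. -/
def layerStep {V : Type*} (p : V → V) (S : Set V) : Set V :=
  S \ (leafIn p S ∪ {v | v ∈ S ∧ ∃ u ∈ leafIn p S, u ≠ v ∧ p u = v})

/-- `layerFrom p S₀ ℓ` is `T^[ℓ]` for the forest induced on the vertex set `S₀`. -/
def layerFrom {V : Type*} (p : V → V) (S₀ : Set V) : ℕ → Set V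
  | 0 => S₀
  | ℓ + 1 => layerStep p (layerFrom p S₀ ℓ)

/-- The layered independent set of the forest induced on the vertex set `S₀`:
the union over all `ℓ` of the leaves of `T^[ℓ]`. -/
def layeredIndepSetOn {V : Type*} (p : V → V) (S₀ : Set V) : Set V :=
  ⋃ ℓ : ℕ, leafIn p (layerFrom p S₀ ℓ)

/-- The layered independent set of the tree/forest with parent function `p`. -/
def layeredIndepSet {V : Type*} (p : V → V) : Set V :=
  layeredIndepSetOn p Set.univ

/-- The probability that the root (label 1, i.e. vertex `0`) of a random recursive tree
with `n` vertices belongs to the layered independent set. -/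
noncomputable def rrtRootProb (n : ℕ) : ℝ :=
  ((recMeasure n) {f : RecTree n | ∃ h : 0 < n,
    (⟨0, h⟩ : Fin n) ∈ layeredIndepSet f.val}).toReal


namespace RRT

variable {n : ℕ}

/-- strictly-decreasing-parent hypothesis -/
def Dec {n : ℕ} (p : Fin n → Fin n) : Prop := ∀ u : Fin n, p u ≠ u → (p u : ℕ) < (u : ℕ)

/-- reverse strong induction on `Fin n` -/
theorem revInd {n : ℕ} (P : Fin n → Prop)
    (step : ∀ v : Fin n, (∀ u : Fin n, v < u → P u) → P v) : ∀ v, P v := by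
  have aux : ∀ m : ℕ, ∀ v : Fin n, n ≤ m + (v : ℕ) → P v := by
    intro m
    induction m with
    | zero => intro v hv; exact absurd v.isLt (by omega)
    | succ m ih =>
      intro v _
      exact step v fun u hu => ih u (by have := (Fin.lt_def.mp hu); omega)
  intro v; exact aux n v (Nat.le_add_right _ _)

def kernAux {n : ℕ} (p : Fin n → Fin n) : ℕ → Fin n → Bool
  | 0, _ => true
  | g+1, v => decide (∀ u : Fin n, v < u → p u = v → kernAux p g u = false)

theorem kernAux_stable {n : ℕ} (p : Fin n → Fin n) :
    ∀ g : ℕ, ∀ v : Fin n, n ≤ g + (v : ℕ) + 1 → kernAux p (g+1) v = kernAux p g v := by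
  intro g
  induction g with
  | zero =>
    intro v hv
    have : ∀ u : Fin n, ¬ v < u := by
      intro u hu
      have := u.isLt; have := Fin.lt_def.mp hu; omega
    simp [kernAux, this]
  | succ g ih =>
    intro v hv
    show decide _ = decide _
    apply decide_eq_decide.mpr
    constructor
    · intro H u h1 h2
      rw [← ih u (by have := Fin.lt_def.mp h1; omega)]; exact H u h1 h2
    · intro H u h1 h2
      rw [ih u (by have := Fin.lt_def.mp h1; omega)]; exact H u h1 h2

def kern {n : ℕ} (p : Fin n → Fin n) (v : Fin n) : Bool := kernAux p n v

theorem kern_iff {n : ℕ} (p : Fin n → Fin n) (v : Fin n) :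
    kern p v = true ↔ ∀ u : Fin n, v < u → p u = v → kern p u = false := by
  have h1 : kern p v = kernAux p (n+1) v :=
    (kernAux_stable p n v (by omega)).symm
  have h2 : ∀ u : Fin n, kernAux p n u = kern p u := fun _ => rfl
  rw [kern] at h1 ⊢
  rw [h1]
  show decide _ = true ↔ _
  rw [decide_eq_true_iff]
  rfl

theorem kern_unique {n : ℕ} (p : Fin n → Fin n) (K : Fin n → Prop)
    (hK : ∀ v, K v ↔ ∀ u : Fin n, v < u → p u = v → ¬ K u) :
    ∀ v, K v ↔ kern p v = true := by
  refine revInd _ fun v ih => ?_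
  rw [hK v, kern_iff p v]
  constructor
  · intro H u h1 h2
    have := (ih u h1).not.mp (H u h1 h2)
    simpa using this
  · intro H u h1 h2
    have := H u h1 h2
    rw [ih u h1]
    simp [this]


section Part2

variable {n : ℕ} {p : Fin n → Fin n}

theorem layerStep_subset (S : Set (Fin n)) : layerStep p S ⊆ S := Set.diff_subset

theorem layerFrom_antitone {S : Set (Fin n)} {m ℓ : ℕ} (h : m ≤ ℓ) :
    layerFrom p S ℓ ⊆ layerFrom p S m := by
  induction ℓ with
  | zero => simp_all
  | succ ℓ ih =>
    rcases Nat.lt_or_ge m (ℓ+1) with h1 | h1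
    · exact (layerStep_subset _).trans (ih (by omega))
    · have : m = ℓ + 1 := by omega
      subst this; exact subset_rfl

theorem exists_leafIn (hp : Dec p) {X : Set (Fin n)} (hX : X.Nonempty) :
    ∃ v, v ∈ leafIn p X := by
  have hfin : X.Finite := Set.toFinite X
  obtain ⟨M, hM, hMmax⟩ := Set.Finite.exists_maximalFor id X hfin hX
  refine ⟨M, hM, fun u hu hne hpu => ?_⟩
  have hpu' : p u ≠ u := by rw [hpu]; exact hne.symm
  have hlt : (p u : ℕ) < u := hp u hpu'
  rw [hpu] at hlt
  have : M = u := Fin.ext (le_antisymm (le_of_lt hlt) (hMmax hu (le_of_lt hlt)))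
  exact hne this.symm

theorem leafIn_not_mem_layerStep {X : Set (Fin n)} {v : Fin n} (hv : v ∈ leafIn p X) :
    v ∉ layerStep p X := fun h => h.2 (Or.inl hv)

theorem layerStep_ssubset (hp : Dec p) {X : Set (Fin n)} (hX : X.Nonempty) :
    layerStep p X ⊂ X := by
  obtain ⟨v, hv⟩ := exists_leafIn hp hX
  exact ⟨layerStep_subset _, fun hsub => leafIn_not_mem_layerStep hv (hsub hv.1)⟩

theorem layerFrom_empty_or (hp : Dec p) (ℓ : ℕ) :
    layerFrom p (Set.univ : Set (Fin n)) ℓ = ∅ ∨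
      (layerFrom p (Set.univ : Set (Fin n)) ℓ).ncard + ℓ ≤ n := by
  induction ℓ with
  | zero => right; simp [layerFrom, Set.ncard_univ]
  | succ ℓ ih =>
    rcases (layerFrom p (Set.univ : Set (Fin n)) ℓ).eq_empty_or_nonempty with he | hne
    · left; show layerStep p _ = ∅; rw [he]
      simp [layerStep]
    · rcases ih with he | hle
      · exact absurd he hne.ne_empty
      · right
        have hlt : (layerFrom p (Set.univ : Set (Fin n)) (ℓ+1)).ncard <
            (layerFrom p (Set.univ : Set (Fin n)) ℓ).ncard :=
          Set.ncard_lt_ncard (layerStep_ssubset hp hne) (Set.toFinite _)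
        omega

theorem not_mem_layerFrom_card (hp : Dec p) (v : Fin n) :
    v ∉ layerFrom p (Set.univ : Set (Fin n)) n := by
  rcases layerFrom_empty_or hp (p := p) n with he | hle
  · rw [he]; exact Set.notMem_empty v
  · have h0 : (layerFrom p (Set.univ : Set (Fin n)) n).ncard = 0 := by omega
    rw [Set.ncard_eq_zero (Set.toFinite _)] at h0
    rw [h0]; exact Set.notMem_empty v

theorem mem_LIS_iff' {v : Fin n} :
    v ∈ layeredIndepSet p ↔ ∃ ℓ, v ∈ leafIn p (layerFrom p Set.univ ℓ) := by
  simp [layeredIndepSet, layeredIndepSetOn, Set.mem_iUnion]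

/-- no two adjacent vertices are both in the LIS -/
theorem leaf_child_exclusion {v u : Fin n} {ℓ m : ℕ}
    (hv : v ∈ leafIn p (layerFrom p Set.univ ℓ))
    (hu : u ∈ leafIn p (layerFrom p Set.univ m)) (hne : u ≠ v) (hpu : p u = v) :
    False := by
  rcases Nat.lt_or_ge m ℓ with h | h
  · -- v survives to step ℓ > m, but is removed at step m+1 as parent of leaf u
    have hvℓ : v ∈ layerFrom p Set.univ (m+1) := layerFrom_antitone (by omega) hv.1
    have hvm : v ∈ layerFrom p Set.univ m := (layerStep_subset _) hvℓ
    exact hvℓ.2 (Or.inr ⟨hvm, u, hu, hne, hpu⟩)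
  · -- u ∈ S m ⊆ S ℓ contradicts v being leaf at ℓ
    have humem : u ∈ layerFrom p Set.univ ℓ := layerFrom_antitone h hu.1
    exact hv.2 u humem hne hpu

theorem not_mem_LIS_child (hp : Dec p) {v : Fin n} (hv : v ∉ layeredIndepSet p) :
    ∃ u, p u = v ∧ u ≠ v ∧ u ∈ layeredIndepSet p := by
  have h0 : v ∈ layerFrom p Set.univ 0 := Set.mem_univ v
  have hex : ∃ ℓ, v ∉ layerFrom p Set.univ ℓ := ⟨n, not_mem_layerFrom_card hp v⟩
  classical
  have hℓ : v ∉ layerFrom p Set.univ (Nat.find hex) := Nat.find_spec hex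
  have hℓpos : Nat.find hex ≠ 0 := by
    intro h; rw [h] at hℓ; exact hℓ h0
  obtain ⟨ℓ', hℓ'⟩ : ∃ ℓ', Nat.find hex = ℓ' + 1 := ⟨Nat.find hex - 1, by omega⟩
  rw [hℓ'] at hℓ
  have hprev : v ∈ layerFrom p Set.univ ℓ' := by
    by_contra h
    exact (Nat.find_min hex (by omega)) h
  have : v ∈ leafIn p (layerFrom p Set.univ ℓ') ∪
      {w | w ∈ layerFrom p Set.univ ℓ' ∧
        ∃ u ∈ leafIn p (layerFrom p Set.univ ℓ'), u ≠ w ∧ p u = w} := by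
    by_contra h
    exact hℓ ⟨hprev, h⟩
  rcases this with h | h
  · exact absurd (mem_LIS_iff'.mpr ⟨ℓ', h⟩) hv
  · obtain ⟨_, u, hu, hne, hpu⟩ := h
    exact ⟨u, hpu, hne, mem_LIS_iff'.mpr ⟨ℓ', hu⟩⟩

theorem mem_LIS_iff_kern (hp : Dec p) (v : Fin n) :
    v ∈ layeredIndepSet p ↔ kern p v = true := by
  refine kern_unique p (fun v => v ∈ layeredIndepSet p) (fun w => ?_) v
  constructor
  · intro hw u hlt hpu hu
    obtain ⟨ℓ, hℓ⟩ := mem_LIS_iff'.mp hw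
    obtain ⟨m, hm⟩ := mem_LIS_iff'.mp hu
    exact leaf_child_exclusion hℓ hm (by exact fun h => absurd h (by exact ne_of_gt hlt)) hpu
  · intro H
    by_contra hw
    obtain ⟨u, hpu, hne, hu⟩ := not_mem_LIS_child hp hw
    have hlt : w < u := by
      have : p u ≠ u := by rw [hpu]; exact hne.symm
      have := hp u this
      rw [hpu] at this
      exact Fin.lt_def.mpr this
    exact H u hlt hpu hu

end Part2

section Part3

variable {n : ℕ} {f : Fin n → Fin n}

theorem IsRecParent.dec (hf : IsRecParent f) : Dec f := by
  intro u hu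
  rcases Nat.eq_zero_or_pos (u : ℕ) with h | h
  · exact absurd ((hf u).1 h) hu
  · exact (hf u).2 (by omega)

def descAux (f : Fin n → Fin n) : ℕ → Fin n → Bool
  | 0, u => decide ((u : ℕ) = 1)
  | g+1, u => if (u : ℕ) = 1 then true else if (u : ℕ) = 0 then false else descAux f g (f u)

theorem descAux_stable (hf : IsRecParent f) :
    ∀ g : ℕ, ∀ u : Fin n, (u : ℕ) ≤ g → descAux f (g+1) u = descAux f g u := by
  intro g
  induction g with
  | zero =>
    intro u hu
    have h0 : (u : ℕ) = 0 := by omega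
    simp [descAux, h0]
  | succ g ih =>
    intro u hu
    show (if (u : ℕ) = 1 then true else if (u : ℕ) = 0 then false
        else descAux f (g+1) (f u)) = _
    by_cases h1 : (u : ℕ) = 1
    · simp [descAux, h1]
    · by_cases h0 : (u : ℕ) = 0
      · simp [descAux, h0, h1]
      · have hlt : (f u : ℕ) < (u : ℕ) := (hf u).2 h0
        simp only [descAux, if_neg h1, if_neg h0]
        exact ih (f u) (by omega)

def desc (f : Fin n → Fin n) (u : Fin n) : Bool := descAux f n u

theorem desc_spec (hf : IsRecParent f) (u : Fin n) :
    desc f u = if (u : ℕ) = 1 then true else if (u : ℕ) = 0 then false else desc f (f u) := by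
  have h := (descAux_stable hf n u (le_of_lt u.isLt)).symm
  rw [desc, h]
  rfl

theorem desc_one (hf : IsRecParent f) (h1 : 1 < n) : desc f ⟨1, h1⟩ = true := by
  rw [desc_spec hf]; simp

theorem desc_zero (hf : IsRecParent f) (h0 : 0 < n) : desc f ⟨0, h0⟩ = false := by
  rw [desc_spec hf]; simp

theorem desc_step (hf : IsRecParent f) {u : Fin n} (hu1 : (u : ℕ) ≠ 1) (hu0 : (u : ℕ) ≠ 0) :
    desc f u = desc f (f u) := by
  rw [desc_spec hf, if_neg hu1, if_neg hu0]

def recTreeEquiv (n : ℕ) : RecTree n ≃ (∀ i : Fin n, Fin (max (i : ℕ) 1)) where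
  toFun f i := ⟨(f.1 i : ℕ), by
    rcases Nat.eq_zero_or_pos (i : ℕ) with h | h
    · have := (f.2 i).1 h
      rw [this, h]; simp
    · have := (f.2 i).2 (by omega)
      omega⟩
  invFun g := ⟨fun i => ⟨(g i : ℕ), by
      have h1 : (g i : ℕ) < max (i : ℕ) 1 := (g i).isLt
      have h2 : (i : ℕ) < n := i.isLt
      have h3 : 0 < n := lt_of_le_of_lt (Nat.zero_le _) h2
      omega⟩, by
    intro i
    constructor
    · intro h
      apply Fin.ext
      have h1 : (g i : ℕ) < max (i : ℕ) 1 := (g i).isLt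
      simp only []
      omega
    · intro h
      have h1 : (g i : ℕ) < max (i : ℕ) 1 := (g i).isLt
      simp only []
      omega⟩
  left_inv f := by apply Subtype.ext; funext i; apply Fin.ext; rfl
  right_inv g := by funext i; apply Fin.ext; rfl

theorem prod_max_eq_factorial : ∀ n : ℕ, (∏ i : Fin n, max (i : ℕ) 1) = Nat.factorial (n - 1) := by
  intro n
  induction n with
  | zero => simp
  | succ n ih =>
    rw [Fin.prod_univ_castSucc]
    simp only [Fin.coe_castSucc, ih]
    rcases Nat.eq_zero_or_pos n with h | h
    · subst h; simp
    · rw [Fin.val_last]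
      have h1 : max n 1 = n := by omega
      rw [h1]
      have : Nat.factorial (n - 1) * n = Nat.factorial n := by
        rw [mul_comm]
        exact Nat.mul_factorial_pred (by omega)
      simpa using this

theorem card_recTree (n : ℕ) : Fintype.card (RecTree n) = Nat.factorial (n - 1) := by
  rw [Fintype.card_congr (recTreeEquiv n), Fintype.card_pi]
  simp only [Fintype.card_fin]
  exact prod_max_eq_factorial n

end Part3

section Part4

variable {n : ℕ}

/-- the increasing enumeration of a finset of `Fin n` -/
def emb (A : Finset (Fin n)) (i : Fin A.card) : Fin n := ((A.orderIsoOfFin rfl) i : Fin n)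

/-- index of an element in the increasing enumeration -/
def idx (A : Finset (Fin n)) (v : Fin n) (hv : v ∈ A) : Fin A.card :=
  (A.orderIsoOfFin rfl).symm ⟨v, hv⟩

theorem emb_mem (A : Finset (Fin n)) (i : Fin A.card) : emb A i ∈ A :=
  ((A.orderIsoOfFin rfl) i).2

theorem emb_lt_emb (A : Finset (Fin n)) {i i' : Fin A.card} :
    emb A i < emb A i' ↔ i < i' := by
  constructor
  · intro hlt
    by_contra h
    rcases lt_or_eq_of_le (not_lt.mp h) with h2 | h2
    · have := (A.orderIsoOfFin rfl).strictMono h2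
      have : emb A i' < emb A i := Subtype.coe_lt_coe.mpr this
      exact absurd hlt (not_lt.mpr (le_of_lt this))
    · subst h2; exact lt_irrefl _ hlt
  · intro hlt
    exact Subtype.coe_lt_coe.mpr ((A.orderIsoOfFin rfl).strictMono hlt)

theorem emb_inj (A : Finset (Fin n)) {i i' : Fin A.card} (h : emb A i = emb A i') : i = i' := by
  by_contra hne
  rcases lt_or_gt_of_ne hne with h2 | h2
  · exact absurd ((emb_lt_emb A).mpr h2) (by rw [h]; exact lt_irrefl _)
  · exact absurd ((emb_lt_emb A).mpr h2) (by rw [h]; exact lt_irrefl _)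

theorem emb_idx (A : Finset (Fin n)) (v : Fin n) (hv : v ∈ A) :
    emb A (idx A v hv) = v := by
  show (((A.orderIsoOfFin rfl) ((A.orderIsoOfFin rfl).symm ⟨v, hv⟩)) : Fin n) = v
  rw [OrderIso.apply_symm_apply]

theorem idx_emb (A : Finset (Fin n)) (i : Fin A.card) :
    idx A (emb A i) (emb_mem A i) = i := by
  apply emb_inj A
  rw [emb_idx]

theorem emb_zero (A : Finset (Fin n)) (hc : 0 < A.card) :
    emb A ⟨0, hc⟩ = A.min' (Finset.card_pos.mp hc) := by
  show (((A.orderIsoOfFin rfl)) ⟨0, hc⟩ : Fin n) = _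
  rw [Finset.coe_orderIsoOfFin_apply]
  exact Finset.orderEmbOfFin_zero rfl hc

end Part4

section Part4b

variable {n : ℕ}

def combineFun (A : Finset (Fin n)) (h0 : 0 < n)
    (g : Fin A.card → Fin A.card) (h : Fin Aᶜ.card → Fin Aᶜ.card) : Fin n → Fin n :=
  fun v =>
    if hv : v ∈ A then
      if (idx A v hv : ℕ) = 0 then ⟨0, h0⟩ else emb A (g (idx A v hv))
    else emb Aᶜ (h (idx Aᶜ v (Finset.mem_compl.mpr hv)))

variable (A : Finset (Fin n)) (h0 : 0 < n) (h1 : 1 < n)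
  (g : Fin A.card → Fin A.card) (h : Fin Aᶜ.card → Fin Aᶜ.card)

theorem combine_eval_A0 (i : Fin A.card) (hi : (i : ℕ) = 0) :
    combineFun A h0 g h (emb A i) = ⟨0, h0⟩ := by
  rw [combineFun, dif_pos (emb_mem A i), idx_emb, if_pos hi]

theorem combine_eval_A (i : Fin A.card) (hi : (i : ℕ) ≠ 0) :
    combineFun A h0 g h (emb A i) = emb A (g i) := by
  rw [combineFun, dif_pos (emb_mem A i), idx_emb, if_neg hi]

theorem combine_eval_B (i : Fin Aᶜ.card) :
    combineFun A h0 g h (emb Aᶜ i) = emb Aᶜ (h i) := by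
  have hv : emb Aᶜ i ∉ A := by
    have := emb_mem Aᶜ i
    exact Finset.mem_compl.mp this
  rw [combineFun, dif_neg hv]
  congr 1
  congr 1
  apply emb_inj Aᶜ
  rw [emb_idx]

section withMem

variable (hA1 : (⟨1, h1⟩ : Fin n) ∈ A) (hA0 : (⟨0, h0⟩ : Fin n) ∉ A)

include hA1 in
theorem cardA_pos : 0 < A.card := Finset.card_pos.mpr ⟨_, hA1⟩

include hA0 in
theorem cardB_pos : 0 < Aᶜ.card := Finset.card_pos.mpr ⟨_, Finset.mem_compl.mpr hA0⟩

include hA0 in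
theorem mem_A_ne_zero {v : Fin n} (hv : v ∈ A) : (v : ℕ) ≠ 0 := by
  intro hz
  have : v = ⟨0, h0⟩ := Fin.ext hz
  rw [this] at hv
  exact hA0 hv

include hA1 hA0 in
theorem embA_zero : emb A ⟨0, cardA_pos A h1 hA1⟩ = ⟨1, h1⟩ := by
  rw [emb_zero]
  apply le_antisymm
  · exact Finset.min'_le A _ hA1
  · apply Finset.le_min'
    intro y hy
    have := mem_A_ne_zero A h0 hA0 hy
    show (1:ℕ) ≤ (y : ℕ)
    omega

include hA0 in
theorem embB_zero : emb Aᶜ ⟨0, cardB_pos A h0 hA0⟩ = ⟨0, h0⟩ := by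
  rw [emb_zero]
  apply le_antisymm
  · exact Finset.min'_le Aᶜ _ (Finset.mem_compl.mpr hA0)
  · rw [Fin.le_def]
    exact Nat.zero_le _

end withMem

end Part4b

section Part4c

theorem bool_ext {a b : Bool} (h : (a = true) ↔ (b = true)) : a = b := by
  cases a <;> cases b <;> simp_all

variable {n : ℕ} (A : Finset (Fin n)) (h0 : 0 < n) (h1 : 1 < n)
  (g : Fin A.card → Fin A.card) (h : Fin Aᶜ.card → Fin Aᶜ.card)
  (hA1 : (⟨1, h1⟩ : Fin n) ∈ A) (hA0 : (⟨0, h0⟩ : Fin n) ∉ A)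
  (hg : IsRecParent g) (hh : IsRecParent h)

theorem mem_rep {v : Fin n} (hv : v ∈ A) : ∃ i, emb A i = v := ⟨idx A v hv, emb_idx A v hv⟩

include hA1 hA0 hg hh in
theorem combine_isRecParent : IsRecParent (combineFun A h0 g h) := by
  intro v
  constructor
  · intro hz
    have hv0 : v = ⟨0, h0⟩ := Fin.ext hz
    subst hv0
    have hrep : emb Aᶜ ⟨0, cardB_pos A h0 hA0⟩ = ⟨0, h0⟩ := embB_zero A h0 hA0
    rw [← hrep, combine_eval_B]
    congr 1
    exact (hh ⟨0, cardB_pos A h0 hA0⟩).1 rfl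
  · intro hz
    by_cases hv : v ∈ A
    · obtain ⟨i, rfl⟩ := mem_rep A hv
      by_cases hi : (i : ℕ) = 0
      · rw [combine_eval_A0 A h0 g h i hi]
        have := mem_A_ne_zero A h0 hA0 hv
        have hzv : ((⟨0, h0⟩ : Fin n) : ℕ) = 0 := rfl
        show ((⟨0, h0⟩ : Fin n) : ℕ) < _
        omega
      · rw [combine_eval_A A h0 g h i hi]
        have hlt : g i < i := Fin.lt_def.mpr ((hg i).2 hi)
        exact Fin.lt_def.mp ((emb_lt_emb A).mpr hlt)
    · obtain ⟨i, rfl⟩ := mem_rep Aᶜ (Finset.mem_compl.mpr hv)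
      have hi : (i : ℕ) ≠ 0 := by
        intro hi0
        have : i = ⟨0, cardB_pos A h0 hA0⟩ := Fin.ext hi0
        rw [this, embB_zero A h0 hA0] at hz
        exact hz rfl
      rw [combine_eval_B]
      have hlt : h i < i := Fin.lt_def.mpr ((hh i).2 hi)
      exact Fin.lt_def.mp ((emb_lt_emb Aᶜ).mpr hlt)

include hA1 hA0 hg hh in
theorem desc_combine : ∀ u : Fin n, (desc (combineFun A h0 g h) u = true ↔ u ∈ A) := by
  have hF : IsRecParent (combineFun A h0 g h) :=
    combine_isRecParent A h0 h1 g h hA1 hA0 hg hh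
  have aux : ∀ m : ℕ, ∀ u : Fin n, (u : ℕ) ≤ m →
      (desc (combineFun A h0 g h) u = true ↔ u ∈ A) := by
    intro m
    induction m with
    | zero =>
      intro u hu
      have hzv : ((⟨0, h0⟩ : Fin n) : ℕ) = 0 := rfl
      have hu0 : u = ⟨0, h0⟩ := Fin.ext (by omega)
      subst hu0
      rw [desc_zero hF h0]
      simp [hA0]
    | succ m ih =>
      intro u hu
      by_cases hu1 : (u : ℕ) = 1
      · have : u = ⟨1, h1⟩ := Fin.ext hu1
        subst this
        rw [desc_one hF h1]
        simp [hA1]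
      · by_cases hu0 : (u : ℕ) = 0
        · have : u = ⟨0, h0⟩ := Fin.ext hu0
          subst this
          rw [desc_zero hF h0]
          simp [hA0]
        · rw [desc_step hF hu1 hu0]
          by_cases hv : u ∈ A
          · obtain ⟨i, rfl⟩ := mem_rep A hv
            have hi : (i : ℕ) ≠ 0 := by
              intro hi0
              have : i = ⟨0, cardA_pos A h1 hA1⟩ := Fin.ext hi0
              rw [this, embA_zero A h0 h1 hA1 hA0] at hu1
              exact hu1 rfl
            rw [combine_eval_A A h0 g h i hi]
            have hmem : emb A (g i) ∈ A := emb_mem A _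
            have hlt : (emb A (g i) : ℕ) < (emb A i : ℕ) := by
              have : g i < i := Fin.lt_def.mpr ((hg i).2 hi)
              exact Fin.lt_def.mp ((emb_lt_emb A).mpr this)
            rw [ih (emb A (g i)) (by omega)]
            simp [hmem, hv]
          · obtain ⟨i, rfl⟩ := mem_rep Aᶜ (Finset.mem_compl.mpr hv)
            have hi : (i : ℕ) ≠ 0 := by
              intro hi0
              have : i = ⟨0, cardB_pos A h0 hA0⟩ := Fin.ext hi0
              rw [this, embB_zero A h0 hA0] at hu0
              exact hu0 rfl
            rw [combine_eval_B]
            have hmem : emb Aᶜ (h i) ∉ A := Finset.mem_compl.mp (emb_mem Aᶜ _)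
            have hlt : (emb Aᶜ (h i) : ℕ) < (emb Aᶜ i : ℕ) := by
              have : h i < i := Fin.lt_def.mpr ((hh i).2 hi)
              exact Fin.lt_def.mp ((emb_lt_emb Aᶜ).mpr this)
            rw [ih (emb Aᶜ (h i)) (by omega)]
            simp [hmem, hv]
  intro u
  exact aux n u (le_of_lt u.isLt)

end Part4c

section Part4d

variable {n : ℕ} (A : Finset (Fin n)) (h0 : 0 < n) (h1 : 1 < n)
  (g : Fin A.card → Fin A.card) (h : Fin Aᶜ.card → Fin Aᶜ.card)
  (hA1 : (⟨1, h1⟩ : Fin n) ∈ A) (hA0 : (⟨0, h0⟩ : Fin n) ∉ A)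

include h1 hA1 hA0 in
theorem kern_combine_aux : ∀ v : Fin n,
    (∀ i : Fin A.card, emb A i = v →
      kern (combineFun A h0 g h) v = kern g i) ∧
    (∀ i : Fin Aᶜ.card, (i : ℕ) ≠ 0 → emb Aᶜ i = v →
      kern (combineFun A h0 g h) v = kern h i) := by
  set F := combineFun A h0 g h with hF
  refine revInd _ fun v ih => ⟨?_, ?_⟩
  · rintro i rfl
    apply bool_ext
    rw [kern_iff, kern_iff]
    constructor
    · intro H i' hlt hgi
      have hi' : (i' : ℕ) ≠ 0 := by
        have := Fin.lt_def.mp hlt; omega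
      have hu : emb A i' > emb A i := (emb_lt_emb A).mpr hlt
      have hFu : F (emb A i') = emb A i := by
        rw [hF, combine_eval_A A h0 g h i' hi', hgi]
      have hker := H (emb A i') hu hFu
      rw [(ih (emb A i') hu).1 i' rfl] at hker
      exact hker
    · intro H u hlt hFu
      by_cases hu : u ∈ A
      · obtain ⟨i', rfl⟩ := mem_rep A hu
        have hi' : (i' : ℕ) ≠ 0 := by
          intro hz
          rw [hF, combine_eval_A0 A h0 g h i' hz] at hFu
          rw [hFu] at hA0
          exact hA0 (emb_mem A i)
        rw [hF, combine_eval_A A h0 g h i' hi'] at hFu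
        have hgi : g i' = i := emb_inj A hFu
        have hii : i < i' := (emb_lt_emb A).mp hlt
        have := H i' hii hgi
        rw [(ih (emb A i') hlt).1 i' rfl]
        exact this
      · obtain ⟨i', rfl⟩ := mem_rep Aᶜ (Finset.mem_compl.mpr hu)
        rw [hF, combine_eval_B] at hFu
        have : emb Aᶜ (h i') ∈ Aᶜ := emb_mem Aᶜ _
        rw [hFu] at this
        exact absurd (emb_mem A i) (Finset.mem_compl.mp this)
  · rintro i hi rfl
    have hvz : (emb Aᶜ i : ℕ) ≠ 0 := by
      intro hz
      have : emb Aᶜ i = ⟨0, h0⟩ := Fin.ext hz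
      rw [← embB_zero A h0 hA0] at this
      have := emb_inj Aᶜ this
      rw [this] at hi
      exact hi rfl
    apply bool_ext
    rw [kern_iff, kern_iff]
    constructor
    · intro H i' hlt hhi
      have hi' : (i' : ℕ) ≠ 0 := by
        have := Fin.lt_def.mp hlt; omega
      have hu : emb Aᶜ i' > emb Aᶜ i := (emb_lt_emb Aᶜ).mpr hlt
      have hFu : F (emb Aᶜ i') = emb Aᶜ i := by
        rw [hF, combine_eval_B, hhi]
      have hker := H (emb Aᶜ i') hu hFu
      rw [(ih (emb Aᶜ i') hu).2 i' hi' rfl] at hker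
      exact hker
    · intro H u hlt hFu
      by_cases hu : u ∈ A
      · obtain ⟨i', rfl⟩ := mem_rep A hu
        by_cases hz : (i' : ℕ) = 0
        · rw [hF, combine_eval_A0 A h0 g h i' hz] at hFu
          rw [← hFu] at hvz
          exact absurd rfl hvz
        · rw [hF, combine_eval_A A h0 g h i' hz] at hFu
          have : emb A (g i') ∈ A := emb_mem A _
          rw [hFu] at this
          exact absurd this (Finset.mem_compl.mp (emb_mem Aᶜ i))
      · obtain ⟨i', rfl⟩ := mem_rep Aᶜ (Finset.mem_compl.mpr hu)
        rw [hF, combine_eval_B] at hFu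
        have hhi : h i' = i := emb_inj Aᶜ hFu
        have hii : i < i' := (emb_lt_emb Aᶜ).mp hlt
        have hi' : (i' : ℕ) ≠ 0 := by
          have := Fin.lt_def.mp hii; omega
        rw [(ih (emb Aᶜ i') hlt).2 i' hi' rfl]
        exact H i' hii hhi

include h1 hA1 hA0 in
theorem kern_combine_root :
    kern (combineFun A h0 g h) ⟨0, h0⟩ =
      (kern h ⟨0, cardB_pos A h0 hA0⟩ && !(kern g ⟨0, cardA_pos A h1 hA1⟩)) := by
  set F := combineFun A h0 g h with hF
  have haux := kern_combine_aux A h0 h1 g h hA1 hA0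
  have key : kern F ⟨0, h0⟩ = true ↔
      (kern g ⟨0, cardA_pos A h1 hA1⟩ = false ∧
       kern h ⟨0, cardB_pos A h0 hA0⟩ = true) := by
    rw [kern_iff]
    constructor
    · intro H
      constructor
      · -- the child emb A 0 = ⟨1,h1⟩
        have hm : emb A ⟨0, cardA_pos A h1 hA1⟩ = ⟨1, h1⟩ := embA_zero A h0 h1 hA1 hA0
        have hlt : (⟨0, h0⟩ : Fin n) < emb A ⟨0, cardA_pos A h1 hA1⟩ := by
          rw [hm]; exact Fin.mk_lt_mk.mpr (by omega)
        have hFu : F (emb A ⟨0, cardA_pos A h1 hA1⟩) = ⟨0, h0⟩ :=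
          combine_eval_A0 A h0 g h _ rfl
        have := H _ hlt hFu
        rw [(haux _).1 ⟨0, cardA_pos A h1 hA1⟩ rfl] at this
        exact this
      · rw [kern_iff]
        intro i' hlt hhz
        have hi' : (i' : ℕ) ≠ 0 := by
          have := Fin.lt_def.mp hlt
          intro hz; omega
        have hu : (⟨0, h0⟩ : Fin n) < emb Aᶜ i' := by
          rw [← embB_zero A h0 hA0]
          exact (emb_lt_emb Aᶜ).mpr (Fin.lt_def.mpr (by have := Fin.lt_def.mp hlt; omega))
        have hFu : F (emb Aᶜ i') = ⟨0, h0⟩ := by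
          rw [hF, combine_eval_B, hhz, embB_zero A h0 hA0]
        have := H _ hu hFu
        rw [(haux _).2 i' hi' rfl] at this
        exact this
    · rintro ⟨hg0, hh0⟩ u hlt hFu
      by_cases hu : u ∈ A
      · obtain ⟨i', rfl⟩ := mem_rep A hu
        by_cases hz : (i' : ℕ) = 0
        · have : i' = ⟨0, cardA_pos A h1 hA1⟩ := Fin.ext hz
          subst this
          rw [(haux _).1 ⟨0, cardA_pos A h1 hA1⟩ rfl]
          exact hg0
        · rw [hF, combine_eval_A A h0 g h i' hz] at hFu
          have := mem_A_ne_zero A h0 hA0 (emb_mem A (g i'))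
          rw [hFu] at this
          exact absurd rfl this
      · obtain ⟨i', rfl⟩ := mem_rep Aᶜ (Finset.mem_compl.mpr hu)
        have hi' : (i' : ℕ) ≠ 0 := by
          intro hz
          have : i' = ⟨0, cardB_pos A h0 hA0⟩ := Fin.ext hz
          rw [this, embB_zero A h0 hA0] at hlt
          exact lt_irrefl _ hlt
        rw [hF, combine_eval_B] at hFu
        rw [← embB_zero A h0 hA0] at hFu
        have hhz : h i' = ⟨0, cardB_pos A h0 hA0⟩ := emb_inj Aᶜ hFu
        rw [(haux _).2 i' hi' rfl]
        rw [kern_iff] at hh0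
        apply hh0 i' _ hhz
        have hzz : ((⟨0, cardB_pos A h0 hA0⟩ : Fin Aᶜ.card) : ℕ) = 0 := rfl
        exact Fin.lt_def.mpr (by omega)
    
  cases hgv : kern g ⟨0, cardA_pos A h1 hA1⟩ <;>
    cases hhv : kern h ⟨0, cardB_pos A h0 hA0⟩ <;>
      simp_all

end Part4d

section Part4e

variable {n : ℕ} (A : Finset (Fin n)) (h0 : 0 < n) (h1 : 1 < n)
  (hA1 : (⟨1, h1⟩ : Fin n) ∈ A) (hA0 : (⟨0, h0⟩ : Fin n) ∉ A)

include h1 hA1 hA0 in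
theorem fiber_card :
    ((Finset.univ.filter (fun gg : RecTree A.card =>
        kern gg.1 ⟨0, cardA_pos A h1 hA1⟩ = false)) ×ˢ
     (Finset.univ.filter (fun hh : RecTree Aᶜ.card =>
        kern hh.1 ⟨0, cardB_pos A h0 hA0⟩ = true))).card =
    (Finset.univ.filter (fun f : RecTree n =>
        kern f.1 ⟨0, h0⟩ = true ∧
          Finset.univ.filter (fun u => desc f.1 u = true) = A)).card := by
  apply Finset.card_bij
    (fun a _ => (⟨combineFun A h0 a.1.1 a.2.1,
      combine_isRecParent A h0 h1 a.1.1 a.2.1 hA1 hA0 a.1.2 a.2.2⟩ : RecTree n))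
  · -- membership
    rintro ⟨gg, hh⟩ ha
    rw [Finset.mem_product, Finset.mem_filter, Finset.mem_filter] at ha
    rw [Finset.mem_filter]
    refine ⟨Finset.mem_univ _, ?_, ?_⟩
    · rw [kern_combine_root A h0 h1 gg.1 hh.1 hA1 hA0, ha.1.2, ha.2.2]
      rfl
    · ext u
      rw [Finset.mem_filter]
      constructor
      · intro hu
        exact (desc_combine A h0 h1 gg.1 hh.1 hA1 hA0 gg.2 hh.2 u).mp hu.2
      · intro hu
        exact ⟨Finset.mem_univ _,
          (desc_combine A h0 h1 gg.1 hh.1 hA1 hA0 gg.2 hh.2 u).mpr hu⟩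
  · -- injectivity
    rintro ⟨gg, hh⟩ _ ⟨gg', hh'⟩ _ heq
    have heq' : combineFun A h0 gg.1 hh.1 = combineFun A h0 gg'.1 hh'.1 :=
      congrArg Subtype.val heq
    have hgeq : gg.1 = gg'.1 := by
      funext i
      by_cases hz : (i : ℕ) = 0
      · rw [(gg.2 i).1 hz, (gg'.2 i).1 hz]
      · apply emb_inj A
        have e1 := combine_eval_A A h0 gg.1 hh.1 i hz
        have e2 := combine_eval_A A h0 gg'.1 hh'.1 i hz
        rw [← e1, ← e2, heq']
    have hheq : hh.1 = hh'.1 := by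
      funext i
      apply emb_inj Aᶜ
      have e1 := combine_eval_B A h0 gg.1 hh.1 i
      have e2 := combine_eval_B A h0 gg'.1 hh'.1 i
      rw [← e1, ← e2, heq']
    have : gg = gg' := Subtype.ext hgeq
    have : hh = hh' := Subtype.ext hheq
    simp_all
  · -- surjectivity
    intro f hf
    rw [Finset.mem_filter] at hf
    obtain ⟨-, hker, hDset⟩ := hf
    have hdesc : ∀ w : Fin n, w ∈ A ↔ desc f.1 w = true := by
      intro w
      rw [← hDset, Finset.mem_filter]
      simp
    -- the A-part
    have hmemA : ∀ i : Fin A.card, (i : ℕ) ≠ 0 → f.1 (emb A i) ∈ A := by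
      intro i hz
      have hu : emb A i ∈ A := emb_mem A i
      have hu0 : (emb A i : ℕ) ≠ 0 := mem_A_ne_zero A h0 hA0 hu
      have hu1 : (emb A i : ℕ) ≠ 1 := by
        have hlt : emb A ⟨0, cardA_pos A h1 hA1⟩ < emb A i := by
          apply (emb_lt_emb A).mpr
          have hzz : ((⟨0, cardA_pos A h1 hA1⟩ : Fin A.card) : ℕ) = 0 := rfl
          exact Fin.lt_def.mpr (by omega)
        rw [embA_zero A h0 h1 hA1 hA0] at hlt
        have := Fin.lt_def.mp hlt
        simp only [] at this
        omega
      have := desc_step f.2 hu1 hu0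
      rw [hdesc]
      rw [← this]
      exact (hdesc _).mp hu
    have hmemB : ∀ i : Fin Aᶜ.card, f.1 (emb Aᶜ i) ∈ Aᶜ := by
      intro i
      have hu : emb Aᶜ i ∈ Aᶜ := emb_mem Aᶜ i
      have hu' : emb Aᶜ i ∉ A := Finset.mem_compl.mp hu
      by_cases hz : (emb Aᶜ i : ℕ) = 0
      · rw [(f.2 _).1 hz]
        exact hu
      · have hu1 : (emb Aᶜ i : ℕ) ≠ 1 := by
          intro hone
          exact hu' (by rw [show emb Aᶜ i = ⟨1, h1⟩ from Fin.ext hone]; exact hA1)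
        have := desc_step f.2 hu1 hz
        rw [Finset.mem_compl]
        intro hmem
        have : desc f.1 (emb Aᶜ i) = true := by rw [this]; exact (hdesc _).mp hmem
        exact hu' ((hdesc _).mpr this)
    classical
    set gfun : Fin A.card → Fin A.card :=
      (fun i => if hz : (i : ℕ) = 0 then i
        else idx A (f.1 (emb A i)) (hmemA i hz)) with hgfun
    set hfun : Fin Aᶜ.card → Fin Aᶜ.card :=
      (fun i => idx Aᶜ (f.1 (emb Aᶜ i)) (hmemB i)) with hhfun
    have hgRec : IsRecParent gfun := by
      intro i
      constructor
      · intro hz; rw [hgfun]; simp only []; rw [dif_pos hz]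
      · intro hz
        rw [hgfun]; simp only []; rw [dif_neg hz]
        have he : emb A (idx A (f.1 (emb A i)) (hmemA i hz)) = f.1 (emb A i) := emb_idx A _ _
        have hu0 : (emb A i : ℕ) ≠ 0 := mem_A_ne_zero A h0 hA0 (emb_mem A i)
        have hlt : (f.1 (emb A i) : ℕ) < (emb A i : ℕ) := (f.2 _).2 hu0
        have hlt2 : emb A (idx A (f.1 (emb A i)) (hmemA i hz)) < emb A i := by
          rw [he]; exact Fin.lt_def.mpr hlt
        exact Fin.lt_def.mp ((emb_lt_emb A).mp hlt2)
    have hhRec : IsRecParent hfun := by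
      intro i
      constructor
      · intro hz
        have hi0 : i = ⟨0, cardB_pos A h0 hA0⟩ := Fin.ext hz
        subst hi0
        rw [hhfun]; simp only []
        apply emb_inj Aᶜ
        rw [emb_idx, embB_zero A h0 hA0, (f.2 _).1 rfl]
      · intro hz
        have hu0 : (emb Aᶜ i : ℕ) ≠ 0 := by
          intro hz0
          have h' : emb Aᶜ i = ⟨0, h0⟩ := Fin.ext hz0
          rw [← embB_zero A h0 hA0] at h'
          have := emb_inj Aᶜ h'
          rw [this] at hz
          exact hz rfl
        have hlt : (f.1 (emb Aᶜ i) : ℕ) < (emb Aᶜ i : ℕ) := (f.2 _).2 hu0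
        have hlt2 : emb Aᶜ (idx Aᶜ (f.1 (emb Aᶜ i)) (hmemB i)) < emb Aᶜ i := by
          rw [emb_idx]; exact Fin.lt_def.mpr hlt
        rw [hhfun]; simp only []
        exact Fin.lt_def.mp ((emb_lt_emb Aᶜ).mp hlt2)
    have hcomb : combineFun A h0 gfun hfun = f.1 := by
      funext v
      by_cases hv : v ∈ A
      · obtain ⟨i, rfl⟩ := mem_rep A hv
        by_cases hz : (i : ℕ) = 0
        · rw [combine_eval_A0 A h0 gfun hfun i hz]
          have hi0 : i = ⟨0, cardA_pos A h1 hA1⟩ := Fin.ext hz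
          rw [hi0, embA_zero A h0 h1 hA1 hA0]
          have hlt : (f.1 ⟨1, h1⟩ : ℕ) < 1 := (f.2 _).2 (by norm_num)
          exact (Fin.ext (by omega)).symm
        · rw [combine_eval_A A h0 gfun hfun i hz]
          rw [hgfun]; simp only []
          rw [dif_neg hz, emb_idx]
      · obtain ⟨i, rfl⟩ := mem_rep Aᶜ (Finset.mem_compl.mpr hv)
        rw [combine_eval_B]
        rw [hhfun]; simp only []
        rw [emb_idx]
    have hbool := kern_combine_root A h0 h1 gfun hfun hA1 hA0
    rw [hcomb, hker] at hbool
    refine ⟨(⟨gfun, hgRec⟩, ⟨hfun, hhRec⟩), ?_, Subtype.ext hcomb⟩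
    rw [Finset.mem_product, Finset.mem_filter, Finset.mem_filter]
    refine ⟨⟨Finset.mem_univ _, ?_⟩, ⟨Finset.mem_univ _, ?_⟩⟩
    · revert hbool
      cases hkg : kern gfun ⟨0, cardA_pos A h1 hA1⟩ <;>
        cases hkh : kern hfun ⟨0, cardB_pos A h0 hA0⟩ <;> simp_all
    · revert hbool
      cases hkg : kern gfun ⟨0, cardA_pos A h1 hA1⟩ <;>
        cases hkh : kern hfun ⟨0, cardB_pos A h0 hA0⟩ <;> simp_all

end Part4e

section Part5

def Ngood (m : ℕ) : ℕ :=
  if hm : 0 < m then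
    (Finset.univ.filter (fun f : RecTree m => kern f.1 ⟨0, hm⟩ = true)).card
  else 0

theorem Ngood_eq {m : ℕ} (hm : 0 < m) :
    Ngood m = (Finset.univ.filter (fun f : RecTree m => kern f.1 ⟨0, hm⟩ = true)).card := by
  rw [Ngood, dif_pos hm]

theorem Ngood_le (m : ℕ) : Ngood m ≤ Nat.factorial (m - 1) := by
  by_cases hm : 0 < m
  · rw [Ngood_eq hm]
    calc _ ≤ (Finset.univ : Finset (RecTree m)).card := Finset.card_filter_le _ _
    _ = _ := by rw [Finset.card_univ, card_recTree]
  · rw [Ngood, dif_neg hm]; exact Nat.zero_le _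

theorem Ngood_one : Ngood 1 = 1 := by
  rw [Ngood_eq (by norm_num : (0:ℕ) < 1)]
  have : ∀ f : RecTree 1, kern f.1 ⟨0, by norm_num⟩ = true := by
    intro f
    rw [kern_iff]
    intro u hu
    have h1 := u.isLt
    have h2 := Fin.lt_def.mp hu
    omega
  rw [Finset.filter_true_of_mem (fun f _ => this f), Finset.card_univ, card_recTree]
  rfl

theorem count_subsets {n : ℕ} (h0 : 0 < n) (h1 : 1 < n) (j : ℕ) (hj1 : 1 ≤ j) :
    ((Finset.univ.filter (fun A : Finset (Fin n) =>
        ((⟨1, h1⟩ : Fin n) ∈ A ∧ (⟨0, h0⟩ : Fin n) ∉ A) ∧ A.card = j)).card)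
      = Nat.choose (n - 2) (j - 1) := by
  set s0 : Finset (Fin n) :=
    ((Finset.univ : Finset (Fin n)).erase ⟨0, h0⟩).erase ⟨1, h1⟩ with hs0
  have hne : (⟨1, h1⟩ : Fin n) ≠ ⟨0, h0⟩ := by
    intro h; exact absurd (congrArg Fin.val h) (by norm_num)
  have hs0card : s0.card = n - 2 := by
    rw [hs0, Finset.card_erase_of_mem, Finset.card_erase_of_mem (Finset.mem_univ _),
      Finset.card_univ, Fintype.card_fin]
    · omega
    · exact Finset.mem_erase.mpr ⟨hne, Finset.mem_univ _⟩
  have := Finset.card_powersetCard (j - 1) s0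
  rw [hs0card] at this
  rw [← this]
  apply Finset.card_bij (fun A _ => A.erase ⟨1, h1⟩)
  · rintro A hA
    rw [Finset.mem_filter] at hA
    obtain ⟨-, ⟨hA1, hA0⟩, hAc⟩ := hA
    rw [Finset.mem_powersetCard]
    constructor
    · intro x hx
      rw [Finset.mem_erase] at hx
      rw [hs0, Finset.mem_erase, Finset.mem_erase]
      refine ⟨hx.1, ?_, Finset.mem_univ _⟩
      intro h; rw [h] at hx; exact hA0 hx.2
    · rw [Finset.card_erase_of_mem hA1, hAc]
  · intro A1 hA1' A2 hA2' heq
    rw [Finset.mem_filter] at hA1' hA2'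
    rw [← Finset.insert_erase hA1'.2.1.1, ← Finset.insert_erase hA2'.2.1.1, heq]
  · intro C hC
    rw [Finset.mem_powersetCard] at hC
    obtain ⟨hCsub, hCcard⟩ := hC
    have h1C : (⟨1, h1⟩ : Fin n) ∉ C := by
      intro h
      have := hCsub h
      rw [hs0, Finset.mem_erase] at this
      exact this.1 rfl
    refine ⟨insert ⟨1, h1⟩ C, ?_, Finset.erase_insert h1C⟩
    rw [Finset.mem_filter]
    refine ⟨Finset.mem_univ _, ⟨Finset.mem_insert_self _ _, ?_⟩, ?_⟩
    · intro h
      rcases Finset.mem_insert.mp h with h | h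
      · exact hne h.symm
      · have := hCsub h
        rw [hs0, Finset.mem_erase, Finset.mem_erase] at this
        exact this.2.1 rfl
    · rw [Finset.card_insert_of_notMem h1C, hCcard]
      omega

theorem Ngood_rec {n : ℕ} (hn : 2 ≤ n) :
    Ngood n = ∑ j ∈ Finset.Icc 1 (n - 1),
      Nat.choose (n - 2) (j - 1) * ((Nat.factorial (j - 1) - Ngood j) * Ngood (n - j)) := by
  have h0 : 0 < n := by omega
  have h1 : 1 < n := by omega
  rw [Ngood_eq h0]
  set 𝒜 : Finset (Finset (Fin n)) :=
    Finset.univ.filter (fun A : Finset (Fin n) =>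
      (⟨1, h1⟩ : Fin n) ∈ A ∧ (⟨0, h0⟩ : Fin n) ∉ A) with h𝒜
  -- step 1 : fiber decomposition over the descendant set of vertex `1`
  have hmaps : ∀ f : RecTree n, f ∈ Finset.univ.filter
      (fun f : RecTree n => kern f.1 ⟨0, h0⟩ = true) →
      (Finset.univ.filter (fun u => desc f.1 u = true)) ∈ 𝒜 := by
    intro f _
    rw [h𝒜, Finset.mem_filter]
    refine ⟨Finset.mem_univ _, ?_, ?_⟩
    · rw [Finset.mem_filter]
      exact ⟨Finset.mem_univ _, desc_one f.2 h1⟩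
    · simp only [Finset.mem_filter, Finset.mem_univ, true_and]
      rw [desc_zero f.2 h0]
      simp
  rw [Finset.card_eq_sum_card_fiberwise hmaps]
  -- step 2 : each fiber
  have hfiber : ∀ A ∈ 𝒜,
      ((Finset.univ.filter (fun f : RecTree n => kern f.1 ⟨0, h0⟩ = true)).filter
        (fun f => (Finset.univ.filter (fun u => desc f.1 u = true)) = A)).card
      = (Nat.factorial (A.card - 1) - Ngood A.card) * Ngood (n - A.card) := by
    intro A hA
    rw [h𝒜, Finset.mem_filter] at hA
    obtain ⟨-, hA1, hA0⟩ := hA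
    rw [Finset.filter_filter]
    rw [← fiber_card A h0 h1 hA1 hA0, Finset.card_product]
    have e1 : (Finset.univ.filter (fun gg : RecTree A.card =>
        kern gg.1 ⟨0, cardA_pos A h1 hA1⟩ = false)).card
        = Nat.factorial (A.card - 1) - Ngood A.card := by
      have hsplit := Finset.card_filter_add_card_filter_not
        (s := (Finset.univ : Finset (RecTree A.card)))
        (p := fun gg : RecTree A.card => kern gg.1 ⟨0, cardA_pos A h1 hA1⟩ = true)
      rw [Finset.card_univ, card_recTree] at hsplit
      have hng : Ngood A.card = (Finset.univ.filter (fun gg : RecTree A.card =>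
          kern gg.1 ⟨0, cardA_pos A h1 hA1⟩ = true)).card := Ngood_eq _
      have hneg : (Finset.univ.filter (fun gg : RecTree A.card =>
          ¬ (kern gg.1 ⟨0, cardA_pos A h1 hA1⟩ = true))).card
          = (Finset.univ.filter (fun gg : RecTree A.card =>
          kern gg.1 ⟨0, cardA_pos A h1 hA1⟩ = false)).card := by
        congr 1
        apply Finset.filter_congr
        intro x _
        simp [Bool.not_eq_true]
      omega
    have e2 : (Finset.univ.filter (fun hh : RecTree Aᶜ.card =>
        kern hh.1 ⟨0, cardB_pos A h0 hA0⟩ = true)).card = Ngood (n - A.card) := by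
      have hng : Ngood Aᶜ.card = (Finset.univ.filter (fun hh : RecTree Aᶜ.card =>
          kern hh.1 ⟨0, cardB_pos A h0 hA0⟩ = true)).card := Ngood_eq _
      rw [← hng]
      congr 1
      rw [Finset.card_compl, Fintype.card_fin]
    rw [e1, e2]
  rw [Finset.sum_congr rfl hfiber]
  -- step 3 : group by cardinality
  have hmaps2 : ∀ A ∈ 𝒜, A.card ∈ Finset.Icc 1 (n - 1) := by
    intro A hA
    rw [h𝒜, Finset.mem_filter] at hA
    obtain ⟨-, hA1, hA0⟩ := hA
    rw [Finset.mem_Icc]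
    constructor
    · exact Finset.card_pos.mpr ⟨_, hA1⟩
    · have : A ⊂ Finset.univ :=
        (Finset.ssubset_iff_of_subset (Finset.subset_univ A)).mpr
          ⟨⟨0, h0⟩, Finset.mem_univ _, hA0⟩
      have := Finset.card_lt_card this
      rw [Finset.card_univ, Fintype.card_fin] at this
      omega
  rw [← Finset.sum_fiberwise_of_maps_to hmaps2
    (fun A => (Nat.factorial (A.card - 1) - Ngood A.card) * Ngood (n - A.card))]
  apply Finset.sum_congr rfl
  intro j hj
  rw [Finset.mem_Icc] at hj
  have hsum : ∀ A ∈ 𝒜.filter (fun A => A.card = j),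
      (Nat.factorial (A.card - 1) - Ngood A.card) * Ngood (n - A.card)
        = (Nat.factorial (j - 1) - Ngood j) * Ngood (n - j) := by
    intro A hA
    rw [Finset.mem_filter] at hA
    rw [hA.2]
  rw [Finset.sum_congr rfl hsum, Finset.sum_const, smul_eq_mul]
  congr 1
  rw [← count_subsets h0 h1 j hj.1]
  congr 1
  rw [h𝒜, Finset.filter_filter]

end Part5

section Part6

theorem rrtRootProb_eq {m : ℕ} (hm : 0 < m) :
    rrtRootProb m = (Ngood m : ℝ) / (Nat.factorial (m - 1) : ℝ) := by
  have hE : {f : RecTree m | ∃ h : 0 < m, (⟨0, h⟩ : Fin m) ∈ layeredIndepSet f.val}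
      = {f : RecTree m | kern f.1 ⟨0, hm⟩ = true} := by
    ext f
    simp only [Set.mem_setOf_eq, Finset.filter_congr_decidable]
    constructor
    · rintro ⟨h, hmem⟩
      exact (mem_LIS_iff_kern (IsRecParent.dec f.2) ⟨0, hm⟩).mp hmem
    · intro h
      exact ⟨hm, (mem_LIS_iff_kern (IsRecParent.dec f.2) ⟨0, hm⟩).mpr h⟩
  rw [rrtRootProb, hE, recMeasure]
  rw [PMF.toMeasure_uniformOfFintype_apply _ (by trivial)]
  rw [ENNReal.toReal_div]
  simp only [ENNReal.toReal_natCast]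
  congr 1
  · congr 1
    rw [Fintype.card_subtype, Ngood_eq hm]
    congr 1
  · congr 1
    rw [card_recTree]

end Part6
end RRT

/-- The probabilities `p̂ₙ` that the root of a random recursive tree belongs to the layered
independent set satisfy `p̂₁ = 1` and, for `n ≥ 2`,
`p̂ₙ = (1/(n-1)) Σ_{j=1}^{n-1} (1 - p̂ⱼ) p̂_{n-j}`. -/
theorem rrtRootProb_recurrence :
    rrtRootProb 1 = 1 ∧
      ∀ n : ℕ, 2 ≤ n →
        rrtRootProb n =
          (1 / ((n : ℝ) - 1)) *
            ∑ j ∈ Finset.Icc 1 (n - 1), (1 - rrtRootProb j) * rrtRootProb (n - j) := by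
  constructor
  · rw [RRT.rrtRootProb_eq (by norm_num), RRT.Ngood_one]
    norm_num
  · intro n hn
    have h0 : 0 < n := by omega
    rw [RRT.rrtRootProb_eq h0]
    have hcast : (RRT.Ngood n : ℝ) = ∑ j ∈ Finset.Icc 1 (n - 1),
        ((Nat.choose (n - 2) (j - 1) : ℝ) *
          (((Nat.factorial (j - 1) : ℝ) - (RRT.Ngood j : ℝ)) * (RRT.Ngood (n - j) : ℝ))) := by
      rw [RRT.Ngood_rec hn, Nat.cast_sum]
      apply Finset.sum_congr rfl
      intro j hj
      rw [Nat.cast_mul, Nat.cast_mul, Nat.cast_sub (RRT.Ngood_le j)]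
    rw [hcast, Finset.sum_div, Finset.mul_sum]
    apply Finset.sum_congr rfl
    intro j hj
    rw [Finset.mem_Icc] at hj
    rw [RRT.rrtRootProb_eq (show 0 < j by omega), RRT.rrtRootProb_eq (show 0 < n - j by omega)]
    have hF1 : ((Nat.factorial (j - 1) : ℝ)) ≠ 0 :=
      Nat.cast_ne_zero.mpr (Nat.factorial_ne_zero _)
    have hF2 : ((Nat.factorial (n - j - 1) : ℝ)) ≠ 0 :=
      Nat.cast_ne_zero.mpr (Nat.factorial_ne_zero _)
    have hFn : ((Nat.factorial (n - 1) : ℝ)) ≠ 0 :=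
      Nat.cast_ne_zero.mpr (Nat.factorial_ne_zero _)
    have hn2 : (2 : ℝ) ≤ (n : ℝ) := by exact_mod_cast hn
    have hn1 : ((n : ℝ) - 1) ≠ 0 := by linarith
    have keyN : Nat.choose (n - 2) (j - 1) * Nat.factorial (j - 1) * Nat.factorial (n - j - 1)
        * (n - 1) = Nat.factorial (n - 1) := by
      have h' : j - 1 ≤ n - 2 := by omega
      have hmain := Nat.choose_mul_factorial_mul_factorial h'
      have e1 : n - 2 - (j - 1) = n - j - 1 := by omega
      rw [e1] at hmain
      rw [hmain]
      have e2 : n - 1 - 1 = n - 2 := by omega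
      have := Nat.mul_factorial_pred (show n - 1 ≠ 0 by omega)
      rw [e2] at this
      rw [mul_comm]
      exact this
    have key : (Nat.choose (n - 2) (j - 1) : ℝ) * (Nat.factorial (j - 1) : ℝ)
        * (Nat.factorial (n - j - 1) : ℝ) * ((n : ℝ) - 1) = (Nat.factorial (n - 1) : ℝ) := by
      have hc : ((n : ℝ) - 1) = ((n - 1 : ℕ) : ℝ) := by
        rw [Nat.cast_sub (by omega : 1 ≤ n)]; norm_num
      rw [hc]
      exact_mod_cast keyN
    have hsub : (n - j) - 1 = n - j - 1 := rfl
    have hrhs : 1 / ((n : ℝ) - 1) *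
        ((1 - (RRT.Ngood j : ℝ) / (Nat.factorial (j - 1) : ℝ)) *
          ((RRT.Ngood (n - j) : ℝ) / (Nat.factorial (n - j - 1) : ℝ)))
        = (((Nat.factorial (j - 1) : ℝ) - (RRT.Ngood j : ℝ)) * (RRT.Ngood (n - j) : ℝ))
          / ((Nat.factorial (j - 1) : ℝ) * (Nat.factorial (n - j - 1) : ℝ) * ((n : ℝ) - 1)) := by
      field_simp
      try exact Or.inl trivial
    rw [hrhs]
    have hden : ((Nat.factorial (j - 1) : ℝ) * (Nat.factorial (n - j - 1) : ℝ)
        * ((n : ℝ) - 1)) ≠ 0 := by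
      exact mul_ne_zero (mul_ne_zero hF1 hF2) hn1
    rw [div_eq_div_iff hFn hden, ← key]
    ring
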